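/- Let ψ : ℕ → ℝ≥0 be monotone (either non-increasing or non-decreasing). Then liminf_{q→∞} (-log ψ(q))/(log q) = liminf_{t→∞} (-log ψ(2^t))/(log 2^t). -/

import Mathlib

open Filter

set_option maxHeartbeats 1000000

/-- For a monotone positive `ψ : ℕ → ℝ`,
`liminf (-log ψ(q))/log q = liminf (-log ψ(2^t))/log 2^t`. -/
theorem liminf_log_ratio_dyadic (ψ : ℕ → ℝ) (hpos : ∀ q, 0 < ψ q)
    (hmono : Antitone ψ ∨ Monotone ψ) :
    liminf (fun q : ℕ => (((-Real.log (ψ q)) / Real.log (q : ℝ) : ℝ) : EReal)) atTop =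
      liminf (fun t : ℕ => (((-Real.log (ψ (2 ^ t))) / Real.log ((2 : ℝ) ^ t) : ℝ) : EReal))
        atTop := by
  have hlog2 : (0:ℝ) < Real.log 2 := Real.log_pos (by norm_num)
  set F : ℕ → EReal := fun q => (((-Real.log (ψ q)) / Real.log (q : ℝ) : ℝ) : EReal) with hF
  have hcast : ∀ t : ℕ, (((-Real.log (ψ (2 ^ t))) / Real.log ((2:ℝ) ^ t) : ℝ) : EReal)
      = F (2 ^ t) := by
    intro t
    have h2 : ((2 ^ t : ℕ) : ℝ) = (2:ℝ) ^ t := by push_cast; ring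
    simp [hF, h2]
  simp_rw [hcast]
  apply le_antisymm
  · have h1 : (fun t : ℕ => F (2 ^ t)) = F ∘ (fun t : ℕ => 2 ^ t) := rfl
    rw [h1, liminf_comp]
    refine liminf_le_liminf_of_le ?_
    exact tendsto_pow_atTop_atTop_of_one_lt (by norm_num)
  · rw [le_liminf_iff]
    intro y hy
    induction y using EReal.rec with
    | bot => exact Eventually.of_forall fun q => EReal.bot_lt_coe _
    | top => exact absurd hy (by simp)
    | coe c =>
      obtain ⟨c', hcc', hc'R⟩ := EReal.exists_between_coe_real hy
      have hev : ∀ᶠ t : ℕ in atTop,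
          c' < (-Real.log (ψ (2 ^ t))) / ((t : ℝ) * Real.log 2) := by
        have h := eventually_lt_of_lt_liminf hc'R
        filter_upwards [h] with t ht
        have h2 : ((2 ^ t : ℕ) : ℝ) = (2:ℝ) ^ t := by push_cast; ring
        have h3 : Real.log ((2 ^ t : ℕ) : ℝ) = (t:ℝ) * Real.log 2 := by
          rw [h2, Real.log_pow]
        rw [← h3]
        have : ((c' : ℝ) : EReal) < ((((-Real.log (ψ (2 ^ t))) /
            Real.log ((2 ^ t : ℕ) : ℝ)) : ℝ) : EReal) := ht
        exact_mod_cast this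
      have hcc'' : c < c' := by exact_mod_cast hcc'
      have hc'c : (0:ℝ) < c' - c := by linarith
      have hbig : ∀ᶠ t : ℕ in atTop, max c (-c') < (t:ℝ) * (c' - c) :=
        (Tendsto.atTop_mul_const hc'c tendsto_natCast_atTop_atTop).eventually_gt_atTop _
      obtain ⟨M, hM⟩ := eventually_atTop.1 (hev.and hbig)
      rw [eventually_atTop]
      refine ⟨2 ^ (max M 1), fun q hq => ?_⟩
      set t := Nat.log 2 q with htdef
      have hq0 : q ≠ 0 := by
        have h1 : (0:ℕ) < 2 ^ (max M 1) := pow_pos (by norm_num) _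
        exact (lt_of_lt_of_le h1 hq).ne'
      have htge : max M 1 ≤ t := by
        have h := Nat.log_mono_right (b := 2) hq
        rwa [Nat.log_pow (by norm_num)] at h
      have ht1 : 1 ≤ t := le_trans (le_max_right _ _) htge
      have htM : M ≤ t := le_trans (le_max_left _ _) htge
      have hlow : 2 ^ t ≤ q := Nat.pow_log_le_self 2 hq0
      have hupp : q < 2 ^ (t + 1) := Nat.lt_pow_succ_log_self (by norm_num) q
      have hq2 : (2:ℕ) ≤ q := le_trans (by
        calc (2:ℕ) = 2 ^ 1 := by norm_num
        _ ≤ 2 ^ t := Nat.pow_le_pow_right (by norm_num) ht1) hlow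
      have hqR : (2:ℝ) ≤ (q:ℝ) := by exact_mod_cast hq2
      have hLpos : (0:ℝ) < Real.log q :=
        lt_of_lt_of_le hlog2 (Real.log_le_log (by norm_num) hqR)
      have hlowR : (2:ℝ) ^ t ≤ (q:ℝ) := by exact_mod_cast hlow
      have huppR : (q:ℝ) ≤ (2:ℝ) ^ (t + 1) := by
        have : q ≤ 2 ^ (t+1) := le_of_lt hupp
        exact_mod_cast this
      have hLlow : (t:ℝ) * Real.log 2 ≤ Real.log q := by
        have h := Real.log_le_log (by positivity) hlowR
        rwa [Real.log_pow] at h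
      have hLupp : Real.log q ≤ ((t:ℝ) + 1) * Real.log 2 := by
        have h := Real.log_le_log (by exact_mod_cast Nat.pos_of_ne_zero hq0) huppR
        rw [Real.log_pow] at h
        push_cast at h
        linarith
      have htR : (1:ℝ) ≤ (t:ℝ) := by exact_mod_cast ht1
      have hdpos : (0:ℝ) < (t:ℝ) * Real.log 2 := by nlinarith
      have hDpos : (0:ℝ) < ((t:ℝ) + 1) * Real.log 2 := by nlinarith
      obtain ⟨ht_ev, ht_big⟩ := hM t htM
      have hbc : c < (t:ℝ) * (c' - c) := lt_of_le_of_lt (le_max_left _ _) ht_big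
      have hbc' : -c' < (t:ℝ) * (c' - c) := lt_of_le_of_lt (le_max_right _ _) ht_big
      -- key real inequality
      have key : c * Real.log q < -Real.log (ψ q) := by
        rcases hmono with hanti | hmon
        · -- antitone case: compare with a = -log ψ(2^t)
          set a : ℝ := -Real.log (ψ (2 ^ t)) with ha_def
          have ha : c' * ((t:ℝ) * Real.log 2) < a := by
            rw [lt_div_iff₀ hdpos] at ht_ev; exact ht_ev
          have hA : a ≤ -Real.log (ψ q) := by
            have h1 : ψ q ≤ ψ (2 ^ t) := hanti hlow
            have h2 := Real.log_le_log (hpos q) h1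
            linarith
          have hkey : c * Real.log q < a := by
            rcases le_or_gt 0 a with h0 | h0
            · rcases le_or_gt 0 c with hc0 | hc0
              · have h1 : c * Real.log q ≤ c * (((t:ℝ) + 1) * Real.log 2) :=
                  mul_le_mul_of_nonneg_left hLupp hc0
                nlinarith
              · nlinarith
            · have hc'neg : c' < 0 := by nlinarith
              have h1 : c * Real.log q < c' * Real.log q := by nlinarith
              have h2 : c' * Real.log q ≤ c' * ((t:ℝ) * Real.log 2) :=
                mul_le_mul_of_nonpos_left hLlow (le_of_lt hc'neg)
              linarith
          linarith
        · -- monotone case: compare with a = -log ψ(2^(t+1))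
          obtain ⟨ht_ev', _⟩ := hM (t + 1) (by omega)
          set a : ℝ := -Real.log (ψ (2 ^ (t + 1))) with ha_def
          have hD'pos : (0:ℝ) < (((t+1 : ℕ)):ℝ) * Real.log 2 := by push_cast; nlinarith
          have ha : c' * (((t:ℝ) + 1) * Real.log 2) < a := by
            rw [lt_div_iff₀ hD'pos] at ht_ev'
            push_cast at ht_ev'
            linarith
          have hA : a ≤ -Real.log (ψ q) := by
            have h1 : ψ q ≤ ψ (2 ^ (t + 1)) := hmon (le_of_lt hupp)
            have h2 := Real.log_le_log (hpos q) h1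
            linarith
          have hkey : c * Real.log q < a := by
            rcases le_or_gt 0 a with h0 | h0
            · rcases le_or_gt 0 c with hc0 | hc0
              · have h1 : c * Real.log q ≤ c * (((t:ℝ) + 1) * Real.log 2) :=
                  mul_le_mul_of_nonneg_left hLupp hc0
                nlinarith
              · nlinarith
            · have hc'neg : c' < 0 := by nlinarith
              have h1 : c * Real.log q ≤ c * ((t:ℝ) * Real.log 2) :=
                mul_le_mul_of_nonpos_left hLlow (by linarith)
              have h2 : c * ((t:ℝ) * Real.log 2) < c' * (((t:ℝ) + 1) * Real.log 2) := by
                nlinarith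
              linarith
          linarith
      have hreal : c < (-Real.log (ψ q)) / Real.log (q:ℝ) := by
        rw [lt_div_iff₀ hLpos]; linarith
      show ((c:ℝ) : EReal) < (((-Real.log (ψ q)) / Real.log (q:ℝ) : ℝ) : EReal)
      exact_mod_cast hreal
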